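/- Let G be a topological group that is amenable (every continuous action on a compact Hausdorff space admits an invariant Borel probability measure) and exotic (every continuous positive definite function on G is constant equal to 1, equivalently every strongly continuous unitary representation is trivial). Then G is extremely amenable: every continuous action of G on a compact Hausdorff space has a fixed point. -/

import Mathlib

open MeasureTheory ComplexOrder

/-- A function `ψ : G → ℂ` is positive definite if `ψ(1) = 1` and all finite
sums `∑_{i,j} aᵢ conj(aⱼ) ψ(gⱼ⁻¹ gᵢ)` are nonnegative reals. -/
def IsPosDef {G : Type*} [Group G] (ψ : G → ℂ) : Prop :=
  ψ 1 = 1 ∧ ∀ (n : ℕ) (a : Fin n → ℂ) (g : Fin n → G),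
    0 ≤ ∑ i, ∑ j, a i * (starRingEnd ℂ) (a j) * ψ ((g j)⁻¹ * g i)

/-- A topological group `G` is amenable if every continuous action on a nonempty
compact Hausdorff space admits an invariant Borel probability measure. -/
def IsAmenableGroup (G : Type) [Group G] [TopologicalSpace G] : Prop :=
  ∀ (X : Type) [TopologicalSpace X] [CompactSpace X] [T2Space X] [Nonempty X]
    [MeasurableSpace X] [BorelSpace X] [MulAction G X],
    Continuous (fun p : G × X => p.1 • p.2) →
    ∃ μ : Measure X, IsProbabilityMeasure μ ∧
      ∀ g : G, Measure.map (fun x => g • x) μ = μ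

/-- A topological group `G` is exotic if every continuous positive definite
function on `G` is identically `1` (equivalently, every strongly continuous
unitary representation is trivial). -/
def IsExoticGroup (G : Type) [Group G] [TopologicalSpace G] : Prop :=
  ∀ ψ : G → ℂ, Continuous ψ → IsPosDef ψ → ∀ g : G, ψ g = 1

/-- Change of variables for an invariant measure. -/
lemma aux_integral_smul_eq {G X : Type} [Group G] [MulAction G X]
    [TopologicalSpace X] [MeasurableSpace X] [BorelSpace X] {μ : Measure X}
    {E : Type*} [NormedAddCommGroup E] [NormedSpace ℝ E]
    [SecondCountableTopology E]
    (g : G) (hg : Continuous fun x : X => g • x)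
    (hμ : Measure.map (fun x : X => g • x) μ = μ)
    {φ : X → E} (hφ : Continuous φ) :
    ∫ x, φ (g • x) ∂μ = ∫ x, φ x ∂μ := by
  conv_rhs => rw [← hμ]
  rw [integral_map hg.measurable.aemeasurable hφ.aestronglyMeasurable]

/-- Integral of a real function coerced to `ℂ`. -/
lemma aux_integral_ofReal {α : Type*} [MeasurableSpace α] {μ : Measure α}
    (f : α → ℝ) : ∫ x, (f x : ℂ) ∂μ = ((∫ x, f x ∂μ : ℝ) : ℂ) :=
  integral_ofReal

open Complex in
/-- An amenable exotic topological group is extremely amenable: every continuous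
action on a nonempty compact Hausdorff space has a fixed point. -/
theorem amenable_exotic_implies_extremely_amenable (G : Type) [Group G]
    [TopologicalSpace G] [IsTopologicalGroup G]
    (hamen : IsAmenableGroup G) (hexotic : IsExoticGroup G) :
    ∀ (X : Type) [TopologicalSpace X] [CompactSpace X] [T2Space X] [Nonempty X]
      [MulAction G X], Continuous (fun p : G × X => p.1 • p.2) →
      ∃ x : X, ∀ g : G, g • x = x := by
  intro X _ _ _ _ _ hcont
  letI : MeasurableSpace X := borel X
  haveI : BorelSpace X := ⟨rfl⟩
  obtain ⟨μ, hμprob, hμinv⟩ := hamen X hcont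
  haveI := hμprob
  -- continuity of translations
  have hsmul : ∀ g : G, Continuous fun x : X => g • x := fun g =>
    hcont.comp (continuous_const.prodMk continuous_id)
  -- integrability of continuous functions
  have hintC : ∀ φ : X → ℂ, Continuous φ → Integrable φ μ := fun φ hφ =>
    hφ.integrable_of_hasCompactSupport (HasCompactSupport.of_compactSpace φ)
  have hintR : ∀ φ : X → ℝ, Continuous φ → Integrable φ μ := fun φ hφ =>
    hφ.integrable_of_hasCompactSupport (HasCompactSupport.of_compactSpace φ)
  -- a point all of whose neighborhoods have positive measure
  have hex : ∃ x : X, ∀ U : Set X, IsOpen U → x ∈ U → 0 < μ U := by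
    by_contra h
    push_neg at h
    choose U hUo hUx hU0 using h
    obtain ⟨t, ht⟩ := isCompact_univ.elim_finite_subcover U hUo
      (fun x _ => Set.mem_iUnion.mpr ⟨x, hUx x⟩)
    have h0 : μ (⋃ i ∈ t, U i) = 0 :=
      (measure_biUnion_null_iff t.countable_toSet).mpr fun i _ =>
        le_antisymm (hU0 i) zero_le
    have h1 : μ Set.univ = 0 := measure_mono_null ht h0
    simp [measure_univ] at h1
  obtain ⟨x, hx⟩ := hex
  refine ⟨x, fun g => ?_⟩
  by_contra hne
  -- the point `y = g⁻¹ • x` is distinct from `x`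
  set y : X := g⁻¹ • x with hy
  have hyx : y ≠ x := by
    intro h
    apply hne
    have := congrArg (fun z => g • z) h
    simpa [hy, smul_smul] using this.symm
  -- Urysohn function separating y from x
  obtain ⟨f₀, hf₀y, hf₀x, hf₀01⟩ :=
    exists_continuous_zero_one_of_isClosed (isClosed_singleton (x := y))
      (isClosed_singleton (x := x)) (Set.disjoint_singleton.mpr hyx)
  set f : X → ℂ := fun z => (f₀ z : ℂ) with hf
  have hfc : Continuous f := continuous_ofReal.comp f₀.continuous
  have hfx : f x = 1 := by simp [hf, hf₀x rfl]
  have hfy : f y = 0 := by simp [hf, hf₀y rfl]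
  -- the normalization constant
  set c : ℝ := ∫ z, normSq (f z) ∂μ with hc
  have hnsc : Continuous fun z => normSq (f z) := continuous_normSq.comp hfc
  have hcpos : 0 < c := by
    rw [hc, integral_pos_iff_support_of_nonneg (fun z => normSq_nonneg _)
      (hintR _ hnsc)]
    have hsub : {z : X | f z ≠ 0} ⊆ Function.support fun z => normSq (f z) := by
      intro z hz
      simpa [Function.mem_support, normSq_eq_zero] using hz
    have hopen : IsOpen {z : X | f z ≠ 0} := by
      have : {z : X | f z ≠ 0} = (f ⁻¹' {0})ᶜ := by ext z; simp
      rw [this]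
      exact (isClosed_singleton.preimage hfc).isOpen_compl
    refine lt_of_lt_of_le (hx {z | f z ≠ 0} hopen ?_) (measure_mono hsub)
    simp [hfx]
  have hcne : (c : ℂ) ≠ 0 := by
    exact_mod_cast ne_of_gt hcpos
  -- the positive definite function
  set ψ : G → ℂ := fun h => (c : ℂ)⁻¹ * ∫ z, f (h⁻¹ • z) * (starRingEnd ℂ) (f z) ∂μ
    with hψ
  -- continuity of ψ
  have hΦc : Continuous fun p : G × X => f (p.1⁻¹ • p.2) := by
    apply hfc.comp
    exact hcont.comp ((continuous_inv.comp continuous_fst).prodMk continuous_snd)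
  have hψc : Continuous ψ := by
    set Φ : C(G × X, ℂ) := ⟨fun p => f (p.1⁻¹ • p.2), hΦc⟩ with hΦ
    set I : C(X, ℂ) → ℂ := fun h => ∫ z, h z * (starRingEnd ℂ) (f z) ∂μ with hI
    have hIlip : LipschitzWith (Real.toNNReal (∫ z, ‖f z‖ ∂μ)) I := by
      apply LipschitzWith.of_dist_le_mul
      intro h₁ h₂
      have hint1 : Integrable (fun z => h₁ z * (starRingEnd ℂ) (f z)) μ :=
        hintC _ (h₁.continuous.mul (continuous_conj.comp hfc))
      have hint2 : Integrable (fun z => h₂ z * (starRingEnd ℂ) (f z)) μ :=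
        hintC _ (h₂.continuous.mul (continuous_conj.comp hfc))
      rw [dist_eq_norm]
      have heq : I h₁ - I h₂ = ∫ z, (h₁ z - h₂ z) * (starRingEnd ℂ) (f z) ∂μ := by
        simp only [hI]
        rw [← integral_sub hint1 hint2]
        congr 1
        funext z
        ring
      rw [heq]
      calc ‖∫ z, (h₁ z - h₂ z) * (starRingEnd ℂ) (f z) ∂μ‖
          ≤ ∫ z, ‖(h₁ z - h₂ z) * (starRingEnd ℂ) (f z)‖ ∂μ :=
            norm_integral_le_integral_norm _
        _ ≤ ∫ z, dist h₁ h₂ * ‖f z‖ ∂μ := by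
            apply integral_mono
            · exact (hintC _ ((h₁.continuous.sub h₂.continuous).mul
                (continuous_conj.comp hfc))).norm
            · exact (hintR _ (continuous_const.mul hfc.norm))
            · intro z
              show ‖(h₁ z - h₂ z) * (starRingEnd ℂ) (f z)‖ ≤ dist h₁ h₂ * ‖f z‖
              rw [norm_mul, RCLike.norm_conj]
              apply mul_le_mul_of_nonneg_right _ (norm_nonneg _)
              rw [← dist_eq_norm]
              exact ContinuousMap.dist_apply_le_dist z
        _ = (∫ z, ‖f z‖ ∂μ) * dist h₁ h₂ := by
            rw [integral_const_mul]; ring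
        _ ≤ (Real.toNNReal (∫ z, ‖f z‖ ∂μ) : ℝ) * dist h₁ h₂ := by
            apply mul_le_mul_of_nonneg_right _ dist_nonneg
            exact Real.le_coe_toNNReal _
    have hψeq : ψ = fun h => (c : ℂ)⁻¹ * I (Φ.curry h) := by
      funext h
      simp [hψ, hI, hΦ, ContinuousMap.curry_apply]
    rw [hψeq]
    exact continuous_const.mul (hIlip.continuous.comp Φ.curry.continuous)
  -- the basic transformation rule
  have hψkey : ∀ h k : G, ψ (k⁻¹ * h)
      = (c : ℂ)⁻¹ * ∫ z, f (h⁻¹ • z) * (starRingEnd ℂ) (f (k⁻¹ • z)) ∂μ := by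
    intro h k
    simp only [hψ]
    congr 1
    have hchg := aux_integral_smul_eq (μ := μ) k⁻¹ (hsmul k⁻¹) (hμinv k⁻¹)
      (φ := fun z => f ((k⁻¹ * h)⁻¹ • z) * (starRingEnd ℂ) (f z))
      ((hfc.comp (hsmul _)).mul (continuous_conj.comp hfc))
    rw [← hchg]
    congr 1
    funext z
    show f ((k⁻¹ * h)⁻¹ • k⁻¹ • z) * (starRingEnd ℂ) (f (k⁻¹ • z))
      = f (h⁻¹ • z) * (starRingEnd ℂ) (f (k⁻¹ • z))
    have harg : (k⁻¹ * h)⁻¹ • k⁻¹ • z = h⁻¹ • z := by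
      rw [smul_smul]
      congr 1
      group
    rw [harg]
  -- ψ is positive definite
  have hψ1 : ψ 1 = 1 := by
    simp only [hψ, inv_one, one_smul, mul_conj]
    rw [aux_integral_ofReal, ← hc, inv_mul_cancel₀ hcne]
  have hψpd : IsPosDef ψ := by
    refine ⟨hψ1, fun n a g' => ?_⟩
    have hterm : ∀ i j : Fin n,
        a i * (starRingEnd ℂ) (a j) * ψ ((g' j)⁻¹ * g' i)
        = (c : ℂ)⁻¹ * ∫ z, (a i * f ((g' i)⁻¹ • z)) *
            (starRingEnd ℂ) (a j * f ((g' j)⁻¹ • z)) ∂μ := by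
      intro i j
      rw [hψkey (g' i) (g' j)]
      have hpt : ∀ z : X, (a i * f ((g' i)⁻¹ • z)) *
          (starRingEnd ℂ) (a j * f ((g' j)⁻¹ • z))
          = (a i * (starRingEnd ℂ) (a j)) *
            (f ((g' i)⁻¹ • z) * (starRingEnd ℂ) (f ((g' j)⁻¹ • z))) := by
        intro z
        simp only [map_mul]
        ring
      simp only [hpt]
      rw [integral_const_mul]
      ring
    have hintij : ∀ (i j : Fin n), Integrable (fun z =>
        (a i * f ((g' i)⁻¹ • z)) * (starRingEnd ℂ) (a j * f ((g' j)⁻¹ • z))) μ := by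
      intro i j
      apply hintC
      exact (continuous_const.mul (hfc.comp (hsmul _))).mul
        (continuous_conj.comp (continuous_const.mul (hfc.comp (hsmul _))))
    have hsum : ∑ i, ∑ j, a i * (starRingEnd ℂ) (a j) * ψ ((g' j)⁻¹ * g' i)
        = (c : ℂ)⁻¹ * ∫ z, (normSq (∑ i, a i * f ((g' i)⁻¹ • z)) : ℂ) ∂μ := by
      simp only [hterm]
      simp only [← Finset.mul_sum]
      congr 1
      have hpt : ∀ z : X, (normSq (∑ i, a i * f ((g' i)⁻¹ • z)) : ℂ)
          = ∑ i, ∑ j, (a i * f ((g' i)⁻¹ • z)) *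
              (starRingEnd ℂ) (a j * f ((g' j)⁻¹ • z)) := by
        intro z
        rw [← mul_conj, map_sum, Finset.sum_mul_sum]
      rw [show (∑ i : Fin n, ∑ j : Fin n, ∫ z, (a i * f ((g' i)⁻¹ • z)) *
          (starRingEnd ℂ) (a j * f ((g' j)⁻¹ • z)) ∂μ)
          = ∫ z, ∑ i : Fin n, ∑ j : Fin n, (a i * f ((g' i)⁻¹ • z)) *
            (starRingEnd ℂ) (a j * f ((g' j)⁻¹ • z)) ∂μ from ?_]
      · congr 1
        funext z
        rw [hpt]
      · rw [integral_finset_sum _ (fun i _ => integrable_finset_sum _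
          (fun j _ => hintij i j))]
        congr 1
        funext i
        rw [integral_finset_sum _ (fun j _ => hintij i j)]
    rw [hsum, aux_integral_ofReal]
    rw [show (c : ℂ)⁻¹ = ((c⁻¹ : ℝ) : ℂ) by push_cast; ring]
    rw [← ofReal_mul, Complex.zero_le_real]
    apply mul_nonneg (inv_nonneg.mpr hcpos.le)
    exact integral_nonneg fun z => normSq_nonneg _
  -- apply exoticness
  have hψg : ψ g = 1 := hexotic ψ hψc hψpd g
  have hintg : ∫ z, f (g⁻¹ • z) * (starRingEnd ℂ) (f z) ∂μ = (c : ℂ) := by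
    simp only [hψ] at hψg
    have h2 : (c : ℂ)⁻¹ * ∫ z, f (g⁻¹ • z) * (starRingEnd ℂ) (f z) ∂μ
        = (c : ℂ)⁻¹ * (c : ℂ) := by
      rw [hψg, inv_mul_cancel₀ hcne]
    exact mul_left_cancel₀ (inv_ne_zero hcne) h2
  -- deduce the a.e. invariance of f
  have hE : ∫ z, normSq (f (g⁻¹ • z) - f z) ∂μ = 0 := by
    have h1 : ∫ z, normSq (f (g⁻¹ • z)) ∂μ = c :=
      aux_integral_smul_eq (μ := μ) g⁻¹ (hsmul g⁻¹) (hμinv g⁻¹) hnsc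
    have h2 : ∫ z, (f (g⁻¹ • z) * (starRingEnd ℂ) (f z)).re ∂μ = c := by
      have := integral_re (μ := μ)
        (f := fun z => f (g⁻¹ • z) * (starRingEnd ℂ) (f z))
        (hintC _ ((hfc.comp (hsmul _)).mul (continuous_conj.comp hfc)))
      rw [hintg] at this
      simpa using this
    have hexp : ∀ z : X, normSq (f (g⁻¹ • z) - f z)
        = (normSq (f (g⁻¹ • z)) + normSq (f z)) -
          2 * (f (g⁻¹ • z) * (starRingEnd ℂ) (f z)).re := by
      intro z; rw [normSq_sub]
    have i1 : Integrable (fun z : X => normSq (f (g⁻¹ • z))) μ :=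
      hintR _ (continuous_normSq.comp (hfc.comp (hsmul g⁻¹)))
    have i2 : Integrable (fun z : X => normSq (f z)) μ := hintR _ hnsc
    have i3 : Integrable (fun z : X =>
        2 * (f (g⁻¹ • z) * (starRingEnd ℂ) (f z)).re) μ :=
      Integrable.const_mul (hintR _ (Complex.continuous_re.comp
        ((hfc.comp (hsmul g⁻¹)).mul (continuous_conj.comp hfc)))) 2
    rw [show (fun z => normSq (f (g⁻¹ • z) - f z)) = fun z =>
      (normSq (f (g⁻¹ • z)) + normSq (f z)) -
        2 * (f (g⁻¹ • z) * (starRingEnd ℂ) (f z)).re from funext hexp]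
    have i12 : Integrable (fun z : X => normSq (f (g⁻¹ • z)) + normSq (f z)) μ :=
      i1.add i2
    rw [integral_sub i12 i3, integral_add i1 i2, integral_const_mul, h1, h2, ← hc]
    ring
  have hint0 : Integrable (fun z : X => normSq (f (g⁻¹ • z) - f z)) μ :=
    hintR _ (continuous_normSq.comp ((hfc.comp (hsmul g⁻¹)).sub hfc))
  have hae : (fun z => normSq (f (g⁻¹ • z) - f z)) =ᵐ[μ] 0 := by
    rw [← integral_eq_zero_iff_of_nonneg (fun z => normSq_nonneg _) hint0]
    exact hE
  -- the open set where f is not invariant is null, but contains x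
  have hnull : μ {z : X | f (g⁻¹ • z) ≠ f z} = 0 := by
    have hsub : {z : X | f (g⁻¹ • z) ≠ f z}
        ⊆ {z : X | ¬ (normSq (f (g⁻¹ • z) - f z) = (0 : X → ℝ) z)} := by
      intro z hz
      simp only [Set.mem_setOf_eq, Pi.zero_apply, normSq_eq_zero, sub_eq_zero]
      exact hz
    exact measure_mono_null hsub hae
  have hmem : x ∈ {z : X | f (g⁻¹ • z) ≠ f z} := by
    simp only [Set.mem_setOf_eq]
    rw [← hy, hfy, hfx]
    exact zero_ne_one
  have hopen : IsOpen {z : X | f (g⁻¹ • z) ≠ f z} := by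
    have heq : {z : X | f (g⁻¹ • z) ≠ f z}
        = ((fun z => f (g⁻¹ • z) - f z) ⁻¹' {0})ᶜ := by
      ext z; simp [sub_eq_zero]
    rw [heq]
    exact (isClosed_singleton.preimage ((hfc.comp (hsmul g⁻¹)).sub hfc)).isOpen_compl
  exact absurd hnull (ne_of_gt (hx _ hopen hmem))
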